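/- Let n ≥ 1 and let Y be an (n−1)-dimensional F-subspace of H₀. Then the number of nontrivial characters χ of the additive group F^n such that p(χ)(Ŷ) is not the zero function (equivalently, such that X(χ) = Y) equals q − 1. -/

import Mathlib

open Module

noncomputable def H0 (F : Type) [Field F] (n : ℕ) : Submodule F (Fin (n + 1) → F) :=
  LinearMap.ker (LinearMap.proj (R := F) (φ := fun _ : Fin (n + 1) => F) (Fin.last n))

def gmap (F : Type) [Field F] (n : ℕ) (a : Fin n → F) :
    (Fin (n + 1) → F) →ₗ[F] (Fin (n + 1) → F) where
  toFun v := v + v (Fin.last n) • (Fin.snoc a 0 : Fin (n + 1) → F)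
  map_add' u v := by
    funext i
    simp only [Pi.add_apply, Pi.smul_apply, smul_eq_mul]
    ring
  map_smul' c v := by
    funext i
    simp only [Pi.add_apply, Pi.smul_apply, smul_eq_mul, RingHom.id_apply]
    ring


open Classical in
/-- `pchi F n χ X` is the function `p(χ)(X) : B_q(n+1) → ℂ` whose value at `Z` is
`∑_{a : g_a(X) = Z} conj (χ a)`; it vanishes off the orbit of `X`. -/
noncomputable def pchi (F : Type) [Field F] [Fintype F] (n : ℕ)
    (χ : AddChar (Fin n → F) ℂ) (X : Submodule F (Fin (n + 1) → F)) :
    Submodule F (Fin (n + 1) → F) → ℂ :=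
  fun Z => ∑ a : Fin n → F,
    if Submodule.map (gmap F n a) X = Z then (starRingEnd ℂ) (χ a) else 0

/-- For a subspace `X ⊆ H₀`, `hatX F n X` is the subspace `X̂` of `F^{n+1}` spanned by `X`
and the last standard basis vector `e_{n+1}`. -/
noncomputable def hatX (F : Type) [Field F] (n : ℕ) (X : Submodule F (Fin (n + 1) → F)) :
    Submodule F (Fin (n + 1) → F) :=
  X ⊔ Submodule.span F {Pi.single (Fin.last n) (1 : F)}


section Aux

variable {F : Type} [Field F] {n : ℕ}

/-- `Fin.snoc · 0` as a linear map. -/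
def sMap (F : Type) [Field F] (n : ℕ) : (Fin n → F) →ₗ[F] (Fin (n + 1) → F) where
  toFun a := Fin.snoc a 0
  map_add' a b := by
    funext i
    refine Fin.lastCases ?_ (fun j => ?_) i <;>
      simp [Fin.snoc_last, Fin.snoc_castSucc]
  map_smul' c a := by
    funext i
    refine Fin.lastCases ?_ (fun j => ?_) i <;>
      simp [Fin.snoc_last, Fin.snoc_castSucc]

lemma sMap_apply (a : Fin n → F) : sMap F n a = Fin.snoc a 0 := rfl

lemma gmap_apply (a : Fin n → F) (v : Fin (n + 1) → F) :
    gmap F n a v = v + v (Fin.last n) • (Fin.snoc a 0 : Fin (n + 1) → F) := rfl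

lemma gmap_apply_last (a : Fin n → F) (v : Fin (n + 1) → F) :
    gmap F n a v (Fin.last n) = v (Fin.last n) := by
  simp [gmap_apply, Fin.snoc_last]

lemma gmap_gmap (a b : Fin n → F) (v : Fin (n + 1) → F) :
    gmap F n a (gmap F n b v) = gmap F n (a + b) v := by
  have hsnoc : (Fin.snoc (a + b) (0 : F) : Fin (n + 1) → F)
      = (Fin.snoc a 0 : Fin (n + 1) → F) + Fin.snoc b 0 := (sMap F n).map_add a b
  rw [gmap_apply, gmap_apply_last, gmap_apply, gmap_apply, hsnoc, smul_add]
  abel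

lemma gmap_zero_apply (v : Fin (n + 1) → F) : gmap F n 0 v = v := by
  have : (Fin.snoc (0 : Fin n → F) (0 : F) : Fin (n + 1) → F) = 0 := (sMap F n).map_zero
  rw [gmap_apply, this, smul_zero, add_zero]

lemma map_gmap_gmap (a b : Fin n → F) (X : Submodule F (Fin (n + 1) → F)) :
    Submodule.map (gmap F n a) (Submodule.map (gmap F n b) X)
      = Submodule.map (gmap F n (a + b)) X := by
  rw [← Submodule.map_comp]
  congr 1
  exact LinearMap.ext fun v => gmap_gmap a b v

lemma map_gmap_zero (X : Submodule F (Fin (n + 1) → F)) :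
    Submodule.map (gmap F n 0) X = X := by
  have : gmap F n 0 = LinearMap.id := LinearMap.ext fun v => gmap_zero_apply v
  rw [this, Submodule.map_id]

lemma mem_H0_iff (v : Fin (n + 1) → F) : v ∈ H0 F n ↔ v (Fin.last n) = 0 := Iff.rfl

variable {Y : Submodule F (Fin (n + 1) → F)} (hY : Y ≤ H0 F n)

lemma mem_of_mem_hat_of_last_eq_zero (hY : Y ≤ H0 F n) {v : Fin (n + 1) → F}
    (hv : v ∈ hatX F n Y) (h0 : v (Fin.last n) = 0) : v ∈ Y := by
  rw [hatX, Submodule.mem_sup] at hv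
  obtain ⟨y, hy, z, hz, rfl⟩ := hv
  rw [Submodule.mem_span_singleton] at hz
  obtain ⟨t, rfl⟩ := hz
  have hyl : y (Fin.last n) = 0 := hY hy
  have ht : t = 0 := by simpa [hyl] using h0
  simpa [ht] using hy

lemma single_mem_hat : Pi.single (Fin.last n) (1 : F) ∈ hatX F n Y :=
  Submodule.mem_sup_right (Submodule.mem_span_singleton_self _)

lemma map_hat_eq_iff (hY : Y ≤ H0 F n) (c : Fin n → F) :
    Submodule.map (gmap F n c) (hatX F n Y) = hatX F n Y ↔
      (Fin.snoc c 0 : Fin (n + 1) → F) ∈ Y := by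
  constructor
  · intro h
    have h1 : gmap F n c (Pi.single (Fin.last n) 1) ∈ hatX F n Y :=
      h ▸ Submodule.mem_map_of_mem single_mem_hat
    have h2 : gmap F n c (Pi.single (Fin.last n) 1)
        = Pi.single (Fin.last n) 1 + Fin.snoc c 0 := by
      rw [gmap_apply]
      simp
    have h3 : (Fin.snoc c 0 : Fin (n + 1) → F) ∈ hatX F n Y := by
      have := Submodule.sub_mem _ h1 (single_mem_hat (Y := Y))
      rw [h2] at this
      simpa using this
    exact mem_of_mem_hat_of_last_eq_zero hY h3 (Fin.snoc_last _ _)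
  · intro h
    have key : ∀ d, (Fin.snoc d 0 : Fin (n + 1) → F) ∈ Y →
        Submodule.map (gmap F n d) (hatX F n Y) ≤ hatX F n Y := by
      rintro d hd v hv
      obtain ⟨w, hw, rfl⟩ := hv
      rw [gmap_apply]
      exact Submodule.add_mem _ hw
        (Submodule.smul_mem _ _ (Submodule.mem_sup_left hd))
    refine le_antisymm (key c h) ?_
    have hneg : (Fin.snoc (-c) 0 : Fin (n + 1) → F) ∈ Y := by
      have he : (Fin.snoc (-c) (0 : F) : Fin (n + 1) → F)
          = -(Fin.snoc c 0 : Fin (n + 1) → F) := map_neg (sMap F n) c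
      rw [he]
      exact Submodule.neg_mem _ h
    have : hatX F n Y
        = Submodule.map (gmap F n c) (Submodule.map (gmap F n (-c)) (hatX F n Y)) := by
      rw [map_gmap_gmap, add_neg_cancel, map_gmap_zero]
    exact this.trans_le (Submodule.map_mono (key (-c) hneg))

lemma map_hat_eq_map_hat_iff (hY : Y ≤ H0 F n) (a b : Fin n → F) :
    Submodule.map (gmap F n a) (hatX F n Y) = Submodule.map (gmap F n b) (hatX F n Y) ↔
      (Fin.snoc (a - b) 0 : Fin (n + 1) → F) ∈ Y := by
  rw [← map_hat_eq_iff hY (a - b)]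
  constructor
  · intro h
    have h2 := congrArg (Submodule.map (gmap F n (-b))) h
    rw [map_gmap_gmap, map_gmap_gmap, neg_add_cancel, map_gmap_zero] at h2
    rw [neg_add_eq_sub] at h2
    rw [h2]
  · intro h
    have h2 := congrArg (Submodule.map (gmap F n b)) h
    rw [map_gmap_gmap, add_sub_cancel] at h2
    exact h2

end Aux

section Aux2

variable {F : Type} [Field F] [Fintype F] {n : ℕ} {Y : Submodule F (Fin (n + 1) → F)}

lemma pchi_eq_zero (hY : Y ≤ H0 F n) (χ : AddChar (Fin n → F) ℂ)
    (s₀ : Fin n → F) (hs₀Y : (Fin.snoc s₀ 0 : Fin (n + 1) → F) ∈ Y) (hs₀ : χ s₀ ≠ 1) :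
    pchi F n χ (hatX F n Y) = 0 := by
  classical
  have hs₀S : s₀ ∈ Submodule.comap (sMap F n) Y := hs₀Y
  funext Z
  simp only [pchi, Pi.zero_apply]
  by_cases hc : ∃ c, Submodule.map (gmap F n c) (hatX F n Y) = Z
  · obtain ⟨c, rfl⟩ := hc
    have hsum : (∑ a : Fin n → F,
        if Submodule.map (gmap F n a) (hatX F n Y)
          = Submodule.map (gmap F n c) (hatX F n Y) then (starRingEnd ℂ) (χ a) else 0)
        = ∑ a : Fin n → F, if a - c ∈ Submodule.comap (sMap F n) Y
            then (starRingEnd ℂ) (χ a) else 0 :=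
      Finset.sum_congr rfl fun a _ => if_congr (map_hat_eq_map_hat_iff hY a c) rfl rfl
    rw [hsum]
    set T := ∑ a : Fin n → F, if a - c ∈ Submodule.comap (sMap F n) Y
      then (starRingEnd ℂ) (χ a) else 0 with hT
    have key : T = (starRingEnd ℂ) (χ s₀) * T := by
      rw [hT, Finset.mul_sum]
      rw [← Equiv.sum_comp (Equiv.addRight s₀) (fun a : Fin n → F =>
        if a - c ∈ Submodule.comap (sMap F n) Y then (starRingEnd ℂ) (χ a) else 0)]
      refine Finset.sum_congr rfl fun a _ => ?_
      have hcond : a + s₀ - c ∈ Submodule.comap (sMap F n) Y ↔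
          a - c ∈ Submodule.comap (sMap F n) Y := by
        have harith : a + s₀ - c = (a - c) + s₀ := by abel
        rw [harith]
        constructor
        · intro h
          have := Submodule.sub_mem _ h hs₀S
          simpa using this
        · intro h
          exact Submodule.add_mem _ h hs₀S
      simp only [Equiv.coe_addRight]
      simp only [hcond]
      rw [mul_ite, mul_zero]
      split_ifs with h
      · rw [AddChar.map_add_eq_mul, map_mul, mul_comm]
      · rfl
    have hzero : (1 - (starRingEnd ℂ) (χ s₀)) * T = 0 := by
      rw [sub_mul, one_mul, ← key, sub_self]
    have hconj : (starRingEnd ℂ) (χ s₀) ≠ 1 := by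
      intro h
      apply hs₀
      have := congrArg (starRingEnd ℂ) h
      simpa using this
    rcases mul_eq_zero.mp hzero with h | h
    · exact absurd (by rwa [sub_eq_zero, eq_comm] at h) hconj
    · exact h
  · exact Finset.sum_eq_zero fun a _ => if_neg (fun h => hc ⟨a, h⟩)

lemma pchi_ne_zero (hY : Y ≤ H0 F n) (χ : AddChar (Fin n → F) ℂ)
    (htriv : ∀ s : Fin n → F, (Fin.snoc s 0 : Fin (n + 1) → F) ∈ Y → χ s = 1) :
    pchi F n χ (hatX F n Y) ≠ 0 := by
  classical
  intro h0
  have h1 := congrFun h0 (hatX F n Y)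
  simp only [pchi, Pi.zero_apply] at h1
  rw [show (∑ a : Fin n → F,
      if Submodule.map (gmap F n a) (hatX F n Y) = hatX F n Y
        then (starRingEnd ℂ) (χ a) else 0)
      = ∑ a : Fin n → F, if (Fin.snoc a 0 : Fin (n + 1) → F) ∈ Y then (1 : ℂ) else 0 from
    Finset.sum_congr rfl fun a _ => by
      rw [if_congr (map_hat_eq_iff hY a) rfl rfl]
      split_ifs with h
      · rw [htriv a h, map_one]
      · rfl] at h1
  rw [Finset.sum_boole] at h1
  have h00 : (Fin.snoc (0 : Fin n → F) 0 : Fin (n + 1) → F) ∈ Y := by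
    rw [show (Fin.snoc (0 : Fin n → F) (0 : F) : Fin (n + 1) → F) = 0 from (sMap F n).map_zero]
    exact Y.zero_mem
  have hmem : (0 : Fin n → F) ∈ Finset.univ.filter
      (fun a : Fin n → F => (Fin.snoc a 0 : Fin (n + 1) → F) ∈ Y) :=
    Finset.mem_filter.mpr ⟨Finset.mem_univ _, h00⟩
  exact Nat.cast_ne_zero.mpr (Finset.card_ne_zero_of_mem hmem) h1

end Aux2

theorem stmt_17 (q n : ℕ) (F : Type) [Field F] [Fintype F] (hq : Fintype.card F = q)
    (hn : 1 ≤ n) (Y : Submodule F (Fin (n + 1) → F)) (hY : Y ≤ H0 F n)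
    (hdim : finrank F Y = n - 1) :
    Nat.card {χ : AddChar (Fin n → F) ℂ //
      (∃ a, χ a ≠ 1) ∧ pchi F n χ (hatX F n Y) ≠ 0} = q - 1 := by
  classical
  set S : Submodule F (Fin n → F) := Submodule.comap (sMap F n) Y with hSdef
  have hinj : Function.Injective (sMap F n) := by
    intro a b h
    funext i
    have := congrFun h (Fin.castSucc i)
    simpa [sMap_apply, Fin.snoc_castSucc] using this
  have hrange : Y ≤ LinearMap.range (sMap F n) := by
    intro v hv
    refine ⟨Fin.init v, ?_⟩
    have hl : v (Fin.last n) = 0 := hY hv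
    funext i
    refine Fin.lastCases ?_ (fun j => ?_) i
    · rw [sMap_apply, Fin.snoc_last, hl]
    · rw [sMap_apply, Fin.snoc_castSucc]
      rfl
  have hmapS : Submodule.map (sMap F n) S = Y := by
    rw [hSdef, Submodule.map_comap_eq, inf_eq_right.mpr hrange]
  have hfinS : finrank F S = n - 1 := by
    have he := (Submodule.equivMapOfInjective (sMap F n) hinj S).finrank_eq
    rw [hmapS] at he
    rw [he, hdim]
  have hquot : finrank F ((Fin n → F) ⧸ S) = 1 := by
    have h2 := Submodule.finrank_quotient_add_finrank S
    rw [hfinS, Module.finrank_fin_fun] at h2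
    omega
  obtain ⟨eqv⟩ := FiniteDimensional.nonempty_linearEquiv_of_finrank_eq
    (R := F) (M := (Fin n → F) ⧸ S) (M' := F) (by rw [hquot, finrank_self])
  set f : (Fin n → F) →ₗ[F] F := eqv.toLinearMap ∘ₗ S.mkQ with hfdef
  have hfsurj : Function.Surjective f := by
    intro x
    obtain ⟨y, hy⟩ := S.mkQ_surjective (eqv.symm x)
    refine ⟨y, ?_⟩
    rw [hfdef]
    simp [hy]
  have hker : ∀ v, f v = 0 ↔ v ∈ S := by
    intro v
    rw [hfdef]
    simp [Submodule.Quotient.mk_eq_zero]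
  obtain ⟨v₀, hv₀⟩ := hfsurj 1
  set Φ : AddChar F ℂ → AddChar (Fin n → F) ℂ :=
    fun ψ => ψ.compAddMonoidHom f.toAddMonoidHom with hΦ
  have hΦinj : Function.Injective Φ := AddChar.compAddMonoidHom_injective_left _ hfsurj
  have hΦone : Φ 1 = 1 := by
    ext a
    simp [hΦ]
  have hΦtriv : ∀ (ψ : AddChar F ℂ) (s : Fin n → F),
      (Fin.snoc s 0 : Fin (n + 1) → F) ∈ Y → Φ ψ s = 1 := by
    intro ψ s hs
    have hfs : f s = 0 := (hker s).mpr hs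
    simp [hΦ, hfs]
  have hcond : ∀ χ : AddChar (Fin n → F) ℂ,
      ((∃ a, χ a ≠ 1) ∧ pchi F n χ (hatX F n Y) ≠ 0) ↔
        (χ ≠ 1 ∧ ∀ s : Fin n → F, (Fin.snoc s 0 : Fin (n + 1) → F) ∈ Y → χ s = 1) := by
    intro χ
    rw [← AddChar.ne_one_iff]
    constructor
    · rintro ⟨h1, h2⟩
      refine ⟨h1, fun s hs => ?_⟩
      by_contra hne
      exact h2 (pchi_eq_zero hY χ s hs hne)
    · rintro ⟨h1, h2⟩
      exact ⟨h1, pchi_ne_zero hY χ h2⟩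
  have hGprop : ∀ ψ : AddChar F ℂ, ψ ≠ 1 →
      ((∃ a, Φ ψ a ≠ 1) ∧ pchi F n (Φ ψ) (hatX F n Y) ≠ 0) := by
    intro ψ hψ
    refine (hcond _).mpr ⟨?_, hΦtriv ψ⟩
    intro h
    exact hψ (hΦinj (h.trans hΦone.symm))
  let G : {ψ : AddChar F ℂ // ψ ≠ 1} → {χ : AddChar (Fin n → F) ℂ //
      (∃ a, χ a ≠ 1) ∧ pchi F n χ (hatX F n Y) ≠ 0} :=
    fun p => ⟨Φ p.1, hGprop p.1 p.2⟩
  have hGbij : Function.Bijective G := by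
    constructor
    · intro p1 p2 h
      exact Subtype.ext (hΦinj (congrArg Subtype.val h))
    · rintro ⟨χ, hχ⟩
      obtain ⟨h1, h2⟩ := (hcond χ).mp hχ
      set ψ : AddChar F ℂ :=
        { toFun := fun x => χ (x • v₀)
          map_zero_eq_one' := by
            show χ ((0 : F) • v₀) = 1
            rw [zero_smul, AddChar.map_zero_eq_one]
          map_add_eq_mul' := fun x y => by
            show χ ((x + y) • v₀) = χ (x • v₀) * χ (y • v₀)
            rw [add_smul]; exact AddChar.map_add_eq_mul χ _ _ } with hψdef
      have hΦψ : Φ ψ = χ := by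
        ext v
        have hm : v - f v • v₀ ∈ S := by
          apply (hker _).mp
          rw [map_sub, map_smul, hv₀, smul_eq_mul, mul_one, sub_self]
        have hmY : (Fin.snoc (v - f v • v₀) 0 : Fin (n + 1) → F) ∈ Y := hm
        calc Φ ψ v = χ (f v • v₀) := rfl
          _ = χ (f v • v₀) * χ (v - f v • v₀) := by rw [h2 _ hmY, mul_one]
          _ = χ (f v • v₀ + (v - f v • v₀)) := (AddChar.map_add_eq_mul χ _ _).symm
          _ = χ v := by congr 1; abel
      refine ⟨⟨ψ, ?_⟩, Subtype.ext hΦψ⟩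
      intro hψ1
      rw [hψ1, hΦone] at hΦψ
      exact h1 hΦψ.symm
  rw [← Nat.card_eq_of_bijective G hGbij]
  rw [Nat.card_eq_fintype_card]
  have hcard : Fintype.card {ψ : AddChar F ℂ // ψ ≠ 1}
      = Fintype.card (AddChar F ℂ) - 1 := by
    simp only [ne_eq]
    rw [Fintype.card_subtype_compl, Fintype.card_subtype_eq]
  rw [hcard, AddChar.card_eq, hq]
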